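/- arXiv:2511.04593 — 2 statements merged into one kernel-verified Lean document; each statement's English description precedes it below -/
import Mathlib

section
/- Let L ≥ 2 and 1 ≤ C < L be integers. With B = β·I + γ·J and D = −γ·I + γ·J as above (β = 1/C − (1−1/C)/(2L−2), γ = (1−1/C)/(2L−2)), the Schur complement B − D B⁻¹ D is symmetric positive definite. -/
open Matrix

set_option maxHeartbeats 1000000 in
theorem stmt6 (L C : ℕ) (hL : 2 ≤ L) (hC1 : 1 ≤ C) (hCL : C < L)
    (β γ : ℝ)
    (hβ : β = 1 / (C : ℝ) - (1 - 1 / (C : ℝ)) / (2 * (L : ℝ) - 2))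
    (hγ : γ = (1 - 1 / (C : ℝ)) / (2 * (L : ℝ) - 2))
    (B D : Matrix (Fin L) (Fin L) ℝ)
    (hB : B = β • (1 : Matrix (Fin L) (Fin L) ℝ) + γ • (Matrix.of fun _ _ => (1 : ℝ)))
    (hD : D = (-γ) • (1 : Matrix (Fin L) (Fin L) ℝ) + γ • (Matrix.of fun _ _ => (1 : ℝ))) :
    (B - D * B⁻¹ * D).IsSymm ∧ (B - D * B⁻¹ * D).PosDef := by
  have hc1 : (1:ℝ) ≤ (C:ℝ) := by exact_mod_cast hC1
  have hl2 : (2:ℝ) ≤ (L:ℝ) := by exact_mod_cast hL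
  have hcl : (C:ℝ) + 1 ≤ (L:ℝ) := by exact_mod_cast hCL
  set l : ℝ := (L:ℝ) with hldef
  set c : ℝ := (C:ℝ) with hcdef
  have hc0 : (0:ℝ) < c := by linarith
  have hcne : c ≠ 0 := ne_of_gt hc0
  have hl1 : (0:ℝ) < l - 1 := by linarith
  have hl1ne : l - 1 ≠ 0 := ne_of_gt hl1
  have hden : (2*l - 2) ≠ 0 := by intro h; linarith [h]
  -- scalar facts
  have hγ0 : 0 ≤ γ := by
    rw [hγ]
    apply div_nonneg
    · have : 1/c ≤ 1 := by rw [div_le_one hc0]; linarith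
      linarith
    · linarith
  have hβγ : β - γ = (l - c)/(c*(l-1)) := by
    rw [hβ, hγ]; field_simp; ring
  have hβγpos : 0 < β - γ := by
    rw [hβγ]
    apply div_pos (by linarith) (by positivity)
  have hβpos : 0 < β := by linarith
  have hβne : β ≠ 0 := ne_of_gt hβpos
  set t : ℝ := β + l*γ with htdef
  have htpos : 0 < t := by
    have h1 : 0 ≤ l*γ := mul_nonneg (by linarith) hγ0
    have : t = β + l*γ := htdef
    linarith
  have htne : t ≠ 0 := ne_of_gt htpos
  have hst : (l-1)*γ < t := by
    have : t - (l-1)*γ = β + γ := by ring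
    nlinarith
  have hsnn : 0 ≤ (l-1)*γ := by positivity
  -- matrix setup
  set J : Matrix (Fin L) (Fin L) ℝ := Matrix.of (fun _ _ => (1:ℝ)) with hJdef
  have hJJ : J * J = l • J := by
    ext i j
    simp [hJdef, Matrix.mul_apply, Finset.sum_const, Finset.card_univ, hldef, Matrix.smul_apply]
  have comb : ∀ a b a' b' : ℝ,
      (a • (1 : Matrix (Fin L) (Fin L) ℝ) + b • J) * (a' • 1 + b' • J)
      = (a*a') • 1 + (a*b' + a'*b + l*(b*b')) • J := by
    intro a b a' b'
    simp only [add_mul, mul_add, smul_mul_assoc, Matrix.mul_smul, one_mul, mul_one, hJJ,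
      smul_smul]
    module
  -- inverse of B
  set δ : ℝ := -γ/(β*t) with hδdef
  set Binv : Matrix (Fin L) (Fin L) ℝ := β⁻¹ • 1 + δ • J with hBinvdef
  have hBB : B * Binv = 1 := by
    rw [hB, hBinvdef, comb]
    have h1 : β*β⁻¹ = 1 := mul_inv_cancel₀ hβne
    have h2 : β*δ + β⁻¹*γ + l*(γ*δ) = 0 := by
      rw [hδdef]; field_simp; ring
    rw [h1, h2]
    simp
  have hBinv : B⁻¹ = Binv := inv_eq_right_inv hBB
  -- compute the Schur complement coefficients
  set a1 : ℝ := -γ*β⁻¹ with ha1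
  set b1 : ℝ := -γ*δ + β⁻¹*γ + l*(γ*δ) with hb1
  set P : ℝ := β - a1*(-γ) with hP
  set Q : ℝ := γ - (a1*γ + -γ*b1 + l*(b1*γ)) with hQ
  have hS : B - D * B⁻¹ * D = P • 1 + Q • J := by
    rw [hBinv, hD, hBinvdef, comb, comb, hB, hP, hQ, ha1, hb1]
    try module
  -- positivity of eigenvalues
  have hPval : P = (β*β - γ*γ)/β := by
    rw [hP, ha1]; field_simp; try ring
  have hPpos : 0 < P := by
    rw [hPval]
    apply div_pos _ hβpos
    nlinarith
  have hPQval : P + l*Q = (t*t - ((l-1)*γ)*((l-1)*γ))/t := by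
    rw [hP, hQ, ha1, hb1, hδdef, htdef]
    field_simp
    ring
  have hPQpos : 0 < P + l*Q := by
    rw [hPQval]
    apply div_pos _ htpos
    nlinarith
  -- symmetry
  have hJsymm : Jᵀ = J := by ext i j; simp [hJdef]
  have hsymm : (B - D * B⁻¹ * D).IsSymm := by
    rw [hS]
    unfold Matrix.IsSymm
    rw [transpose_add, transpose_smul, transpose_smul, transpose_one, hJsymm]
  refine ⟨hsymm, Matrix.PosDef.of_dotProduct_mulVec_pos ?_ ?_⟩
  · unfold Matrix.IsHermitian
    rw [conjTranspose_eq_transpose_of_trivial]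
    exact hsymm
  · intro x hx
    rw [hS]
    have hJx : J *ᵥ x = fun _ => ∑ j, x j := by
      ext i
      simp [hJdef, Matrix.mulVec, dotProduct]
    have hmv : (P • (1:Matrix (Fin L) (Fin L) ℝ) + Q • J) *ᵥ x
        = fun i => P * x i + Q * (∑ j, x j) := by
      rw [Matrix.add_mulVec, Matrix.smul_mulVec, Matrix.smul_mulVec,
        Matrix.one_mulVec, hJx]
      ext i
      simp
    rw [hmv]
    have hdp : star x ⬝ᵥ (fun i => P * x i + Q * (∑ j, x j))
        = P * (∑ i, x i * x i) + Q * ((∑ i, x i) * (∑ i, x i)) := by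
      simp only [dotProduct, star_trivial]
      have key : ∀ i, x i * (P * x i + Q * (∑ j, x j))
          = P * (x i * x i) + (Q * (∑ j, x j)) * x i := fun i => by ring
      simp_rw [key]
      rw [Finset.sum_add_distrib, ← Finset.mul_sum, ← Finset.mul_sum]
      ring
    rw [hdp]
    -- Cauchy–Schwarz and positivity
    have hS2pos : 0 < ∑ i, x i * x i := by
      obtain ⟨i, hi⟩ := Function.ne_iff.mp hx
      apply Finset.sum_pos' (fun j _ => mul_self_nonneg _)
      exact ⟨i, Finset.mem_univ i, mul_self_pos.mpr hi⟩
    have hCS : (∑ i, x i) * (∑ i, x i) ≤ l * ∑ i, x i * x i := by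
      have := sq_sum_le_card_mul_sum_sq (s := Finset.univ) (f := x)
      simpa [sq, Finset.card_univ, hldef] using this
    rcases le_or_gt 0 Q with hQ0 | hQ0
    · have : 0 < P * (∑ i, x i * x i) := by positivity
      nlinarith [mul_self_nonneg (∑ i, x i)]
    · nlinarith [mul_le_mul_of_nonpos_left hCS (le_of_lt hQ0)]
end

section
/- Let L ≥ 2 and 1 ≤ C < L be integers. The (2L)×(2L) block matrix A = [[B, D],[D, B]], with B = β·I + γ·J, D = −γ·I + γ·J, β = 1/C − (1−1/C)/(2L−2), γ = (1−1/C)/(2L−2), is symmetric positive definite. In particular, A·α = 0 implies α = 0. -/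
open Matrix

theorem stmt7 (L C : ℕ) (hL : 2 ≤ L) (hC1 : 1 ≤ C) (hCL : C < L)
    (β γ : ℝ)
    (hβ : β = 1 / (C : ℝ) - (1 - 1 / (C : ℝ)) / (2 * (L : ℝ) - 2))
    (hγ : γ = (1 - 1 / (C : ℝ)) / (2 * (L : ℝ) - 2))
    (B D : Matrix (Fin L) (Fin L) ℝ)
    (hB : B = β • (1 : Matrix (Fin L) (Fin L) ℝ) + γ • (Matrix.of fun _ _ => (1 : ℝ)))
    (hD : D = (-γ) • (1 : Matrix (Fin L) (Fin L) ℝ) + γ • (Matrix.of fun _ _ => (1 : ℝ)))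
    (A : Matrix (Fin L ⊕ Fin L) (Fin L ⊕ Fin L) ℝ)
    (hA : A = Matrix.fromBlocks B D D B) :
    A.IsSymm ∧ A.PosDef ∧ ∀ α : Fin L ⊕ Fin L → ℝ, A.mulVec α = 0 → α = 0 := by
  have hCre : (1:ℝ) ≤ (C:ℝ) := by exact_mod_cast hC1
  have hLre : (2:ℝ) ≤ (L:ℝ) := by exact_mod_cast hL
  have hCLre : (C:ℝ) < L := by exact_mod_cast hCL
  have hC0 : (0:ℝ) < C := by linarith
  have hden : (0:ℝ) < 2*(L:ℝ) - 2 := by linarith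
  have hγ0 : 0 ≤ γ := by
    rw [hγ]
    apply div_nonneg _ hden.le
    have : 1/(C:ℝ) ≤ 1 := by
      rw [div_le_one hC0]; exact hCre
    linarith
  have hβγ : 0 < β - γ := by
    have h : β - γ = ((L:ℝ) - C)/((C:ℝ)*((L:ℝ)-1)) := by
      rw [hβ, hγ]
      have h1 : (C:ℝ) ≠ 0 := hC0.ne'
      have h2 : 2*(L:ℝ) - 2 ≠ 0 := hden.ne'
      have h3 : (L:ℝ) - 1 ≠ 0 := by intro h; apply h2; linarith
      field_simp
      ring
    rw [h]
    exact div_pos (by linarith) (mul_pos hC0 (by linarith))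
  -- symmetry
  have hJ : (Matrix.of fun _ _ => (1:ℝ) : Matrix (Fin L) (Fin L) ℝ)ᵀ
      = Matrix.of fun _ _ => (1:ℝ) := by
    ext i j; simp
  have hBsym : Bᵀ = B := by
    rw [hB, transpose_add, transpose_smul, transpose_smul, transpose_one, hJ]
  have hDsym : Dᵀ = D := by
    rw [hD, transpose_add, transpose_smul, transpose_smul, transpose_one, hJ]
  have hsym : A.IsSymm := by
    rw [Matrix.IsSymm, hA, fromBlocks_transpose, hBsym, hDsym]
  have hherm : A.IsHermitian := by
    rw [Matrix.IsHermitian, conjTranspose_eq_transpose_of_trivial]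
    exact hsym
  -- quadratic form
  have key : ∀ x : Fin L ⊕ Fin L → ℝ,
      x ⬝ᵥ A *ᵥ x = (β - γ) * ((∑ i, x (Sum.inl i)^2) + ∑ i, x (Sum.inr i)^2)
        + γ * (∑ i, (x (Sum.inl i) - x (Sum.inr i))^2)
        + γ * ((∑ i, x (Sum.inl i)) + ∑ i, x (Sum.inr i))^2 := by
    intro x
    set u : Fin L → ℝ := fun i => x (Sum.inl i) with hu
    set v : Fin L → ℝ := fun i => x (Sum.inr i) with hv
    have hml : ∀ i, (A *ᵥ x) (Sum.inl i)
        = β * u i - γ * v i + γ * ((∑ k, u k) + ∑ k, v k) := by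
      intro i
      simp only [hA, Matrix.mulVec, dotProduct, Fintype.sum_sum_type,
        fromBlocks_apply₁₁, fromBlocks_apply₁₂, hB, hD, Matrix.add_apply,
        Matrix.smul_apply, Matrix.one_apply, Matrix.of_apply, smul_eq_mul,
        mul_one, mul_ite, mul_zero, add_mul, ite_mul, zero_mul,
        Finset.sum_add_distrib, Finset.sum_ite_eq, Finset.mem_univ, if_true,
        neg_mul, ← Finset.mul_sum]
      ring
    have hmr : ∀ i, (A *ᵥ x) (Sum.inr i)
        = β * v i - γ * u i + γ * ((∑ k, u k) + ∑ k, v k) := by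
      intro i
      simp only [hA, Matrix.mulVec, dotProduct, Fintype.sum_sum_type,
        fromBlocks_apply₂₁, fromBlocks_apply₂₂, hB, hD, Matrix.add_apply,
        Matrix.smul_apply, Matrix.one_apply, Matrix.of_apply, smul_eq_mul,
        mul_one, mul_ite, mul_zero, add_mul, ite_mul, zero_mul,
        Finset.sum_add_distrib, Finset.sum_ite_eq, Finset.mem_univ, if_true,
        neg_mul, ← Finset.mul_sum]
      ring
    have hdot : x ⬝ᵥ A *ᵥ x
        = (∑ i, u i * ((A *ᵥ x) (Sum.inl i))) + ∑ i, v i * ((A *ᵥ x) (Sum.inr i)) := by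
      simp [dotProduct, Fintype.sum_sum_type, hu, hv]
    rw [hdot]
    simp only [hml, hmr]
    have l1 : ∀ i : Fin L, u i * (β * u i - γ * v i + γ * ((∑ k, u k) + ∑ k, v k))
        = β * u i^2 - γ * (u i * v i) + (γ * ((∑ k, u k) + ∑ k, v k)) * u i :=
      fun i => by ring
    have l2 : ∀ i : Fin L, v i * (β * v i - γ * u i + γ * ((∑ k, u k) + ∑ k, v k))
        = β * v i^2 - γ * (u i * v i) + (γ * ((∑ k, u k) + ∑ k, v k)) * v i :=
      fun i => by ring
    have l3 : ∀ i : Fin L, (u i - v i)^2 = u i^2 - 2 * (u i * v i) + v i^2 :=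
      fun i => by ring
    have e1 : ∀ i, x (Sum.inl i) = u i := fun i => rfl
    have e2 : ∀ i, x (Sum.inr i) = v i := fun i => rfl
    simp only [e1, e2]
    simp only [l1, l2, l3, Finset.sum_add_distrib, Finset.sum_sub_distrib,
      ← Finset.mul_sum]
    ring
  have hpd : A.PosDef := by
    refine posDef_iff_dotProduct_mulVec.mpr ⟨hherm, fun x hx => ?_⟩
    have hstar : star x = x := by ext i; simp
    rw [hstar, key x]
    obtain ⟨j, hj⟩ := Function.ne_iff.mp hx
    have hsq : 0 < (∑ i, x (Sum.inl i)^2) + ∑ i, x (Sum.inr i)^2 := by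
      have := Fintype.sum_sum_type (fun j : Fin L ⊕ Fin L => x j ^ 2)
      rw [← this]
      apply Finset.sum_pos' (fun i _ => sq_nonneg _)
      exact ⟨j, Finset.mem_univ _, sq_pos_of_ne_zero hj⟩
    have h2 : 0 ≤ γ * (∑ i, (x (Sum.inl i) - x (Sum.inr i))^2) :=
      mul_nonneg hγ0 (Finset.sum_nonneg fun i _ => sq_nonneg _)
    have h3 : 0 ≤ γ * ((∑ i, x (Sum.inl i)) + ∑ i, x (Sum.inr i))^2 :=
      mul_nonneg hγ0 (sq_nonneg _)
    nlinarith [mul_pos hβγ hsq]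
  refine ⟨hsym, hpd, fun α hα => ?_⟩
  by_contra hne
  have := hpd.dotProduct_mulVec_pos hne
  rw [hα, dotProduct_zero] at this
  exact lt_irrefl 0 this
end
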